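/- Let s_n(v) be the sequence of polynomials defined by s_0(v)=1, s_1(v)=v, and for n ≥ 2, s_n(v) = (1/2) v s_{n-1}(v) + (1/2) ∑_{k=2}^{n-1} v^{k-1} s_{n-k}(v) / 2^{k-1} + v^{n-1}/2^{n-1}. Then the generating function S(z,v) = ∑_{n≥1} s_n(v) z^n equals 2zv(2 + (1-v)z) / (4 - 4vz + (v^2 - v)z^2) as a formal power series in z. -/

import Mathlib

open PowerSeries Polynomial

set_option maxHeartbeats 1000000 in
/-- Let `s n` be the probability generating polynomials of the number of correct
guesses after a single shelf shuffle, given by `s 0 = 1`, `s 1 = v` and, for `n ≥ 2`,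
`s n = (1/2) v s (n-1) + (1/2) ∑_{k=2}^{n-1} v^(k-1) s (n-k) / 2^(k-1) + v^(n-1)/2^(n-1)`.
Then `S(z,v) = ∑_{n ≥ 1} s n z^n` equals `2zv(2+(1-v)z)/(4-4vz+(v²-v)z²)` as a formal
power series in `z`, i.e. `S(z,v) · (4-4vz+(v²-v)z²) = 2zv(2+(1-v)z)` (the denominator
has invertible constant term `4`). Here `v = Polynomial.X` and `z = PowerSeries.X`. -/
theorem shelf_guessing_generating_function (s : ℕ → Polynomial ℚ)
    (h0 : s 0 = 1) (h1 : s 1 = Polynomial.X)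
    (hrec : ∀ n, 2 ≤ n → s n =
      Polynomial.C (1/2) * Polynomial.X * s (n - 1)
      + Polynomial.C (1/2) * ∑ k ∈ Finset.Icc 2 (n - 1),
          Polynomial.C (1 / 2 ^ (k - 1)) * Polynomial.X ^ (k - 1) * s (n - k)
      + Polynomial.C (1 / 2 ^ (n - 1)) * Polynomial.X ^ (n - 1)) :
    (PowerSeries.mk fun n => if n = 0 then 0 else s n)
        * (4 - 4 * PowerSeries.C (R := Polynomial ℚ) Polynomial.X * PowerSeries.X
            + (PowerSeries.C (R := Polynomial ℚ) Polynomial.X ^ 2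
                - PowerSeries.C (R := Polynomial ℚ) Polynomial.X) * PowerSeries.X ^ 2)
      = 2 * PowerSeries.X * PowerSeries.C (R := Polynomial ℚ) Polynomial.X
          * (2 + (1 - PowerSeries.C (R := Polynomial ℚ) Polynomial.X) * PowerSeries.X) := by
  have h2 : (2 : Polynomial ℚ) * Polynomial.C (1/2 : ℚ) = 1 := by
    rw [← map_ofNat (Polynomial.C : ℚ →+* Polynomial ℚ) 2, ← map_mul]
    norm_num
  have h4 : (4 : Polynomial ℚ) * Polynomial.C (1/4 : ℚ) = 1 := by
    rw [← map_ofNat (Polynomial.C : ℚ →+* Polynomial ℚ) 4, ← map_mul]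
    norm_num
  -- the key linear two-term recurrence
  have key : ∀ m : ℕ, s (m + 3) = Polynomial.X * s (m + 2)
      + Polynomial.C (1/4 : ℚ) * (Polynomial.X - Polynomial.X ^ 2) * s (m + 1) := by
    intro m
    have hA : ∑ k ∈ Finset.Icc 2 (m + 2),
          Polynomial.C ((1:ℚ) / 2 ^ (k - 1)) * Polynomial.X ^ (k - 1) * s (m + 3 - k)
        = Polynomial.C (1/2 : ℚ) * Polynomial.X * s (m + 1)
          + Polynomial.C (1/2 : ℚ) * Polynomial.X
            * ∑ k ∈ Finset.Icc 2 (m + 1),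
                Polynomial.C ((1:ℚ) / 2 ^ (k - 1)) * Polynomial.X ^ (k - 1) * s (m + 2 - k) := by
      rw [show Finset.Icc 2 (m+2) = Finset.Ico 2 (m+3) by rw [← Finset.Ico_add_one_right_eq_Icc]; rfl,
          show Finset.Icc 2 (m+1) = Finset.Ico 2 (m+2) by rw [← Finset.Ico_add_one_right_eq_Icc]; rfl,
          Finset.sum_Ico_eq_sum_range, Finset.sum_Ico_eq_sum_range]
      simp only [show m + 3 - 2 = m + 1 by omega, show m + 2 - 2 = m by omega]
      rw [Finset.sum_range_succ']
      rw [Finset.mul_sum, add_comm]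
      congr 1
      · rw [show 2 + 0 - 1 = 1 by omega, show m + 3 - (2+0) = m + 1 by omega]
        ring
      · apply Finset.sum_congr rfl
        intro i _
        rw [show 2 + (i+1) - 1 = i + 2 by omega, show m + 3 - (2 + (i+1)) = m - i by omega,
            show 2 + i - 1 = i + 1 by omega, show m + 2 - (2 + i) = m - i by omega,
            show ((1:ℚ) / 2 ^ (i+2)) = (1/2) * (1 / 2 ^ (i+1)) by ring, map_mul]
        ring
    have e3 := hrec (m + 3) (by omega)
    have e2 := hrec (m + 2) (by omega)
    simp only [show m + 3 - 1 = m + 2 by omega, show m + 2 - 1 = m + 1 by omega] at e3 e2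
    rw [e3, hA, e2]
    set A := ∑ k ∈ Finset.Icc 2 (m + 1),
        Polynomial.C ((1:ℚ) / 2 ^ (k - 1)) * Polynomial.X ^ (k - 1) * s (m + 2 - k) with hAdef
    have hc : Polynomial.C (1/2 : ℚ) * Polynomial.C ((1:ℚ) / 2 ^ (m + 1))
        = Polynomial.C ((1:ℚ) / 2 ^ (m + 2)) := by
      rw [← map_mul]; congr 1; ring
    have hq : Polynomial.C (1/4 : ℚ)
        = Polynomial.C (1/2 : ℚ) * Polynomial.C (1/2 : ℚ) := by
      rw [← map_mul]; norm_num
    rw [hq]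
    linear_combination (Polynomial.C (1/2:ℚ) * Polynomial.X^2 * s (m+1)
        + Polynomial.C (1/2:ℚ) * Polynomial.X * A
        + Polynomial.C ((1:ℚ)/2^(m+1)) * Polynomial.X^(m+2)) * h2
      - Polynomial.X^(m+2) * hc
  -- now prove the power series identity coefficient by coefficient
  have hL : (PowerSeries.mk fun n => if n = 0 then 0 else s n)
        * (4 - 4 * PowerSeries.C (R := Polynomial ℚ) Polynomial.X * PowerSeries.X
            + (PowerSeries.C (R := Polynomial ℚ) Polynomial.X ^ 2
                - PowerSeries.C (R := Polynomial ℚ) Polynomial.X) * PowerSeries.X ^ 2)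
      = PowerSeries.C (R := Polynomial ℚ) 4 * (PowerSeries.mk fun n => if n = 0 then 0 else s n)
        + PowerSeries.C (R := Polynomial ℚ) (-(4 * Polynomial.X))
            * ((PowerSeries.mk fun n => if n = 0 then 0 else s n) * PowerSeries.X ^ 1)
        + PowerSeries.C (R := Polynomial ℚ) (Polynomial.X ^ 2 - Polynomial.X)
            * ((PowerSeries.mk fun n => if n = 0 then 0 else s n) * PowerSeries.X ^ 2) := by
    simp only [map_neg, map_sub, map_mul, map_pow, map_ofNat]
    ring
  have hR : 2 * PowerSeries.X * PowerSeries.C (R := Polynomial ℚ) Polynomial.X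
        * (2 + (1 - PowerSeries.C (R := Polynomial ℚ) Polynomial.X) * PowerSeries.X)
      = PowerSeries.C (R := Polynomial ℚ) (4 * Polynomial.X) * PowerSeries.X ^ 1
        + PowerSeries.C (R := Polynomial ℚ) (2 * Polynomial.X - 2 * Polynomial.X ^ 2)
            * PowerSeries.X ^ 2 := by
    simp only [map_sub, map_mul, map_pow, map_ofNat]
    ring
  rw [hL, hR]
  refine PowerSeries.ext fun n => ?_
  simp only [map_add, PowerSeries.coeff_C_mul, PowerSeries.coeff_mul_X_pow',
    PowerSeries.coeff_C_mul_X_pow, PowerSeries.coeff_X_pow, PowerSeries.coeff_C, PowerSeries.coeff_mk]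
  match n with
  | 0 => norm_num
  | 1 => norm_num [h1]
  | 2 =>
    have e2 := hrec 2 (by omega)
    norm_num at e2
    norm_num
    rw [e2, h1]
    linear_combination (2 * Polynomial.X ^ 2 + 2 * Polynomial.X) * h2
  | (n + 3) =>
    simp only [show n + 3 - 1 = n + 2 by omega, show n + 3 - 2 = n + 1 by omega,
      show (1 ≤ n + 3) = True by simp, show (2 ≤ n + 3) = True by simp,
      show (n + 3 = 0) = False by simp, show (n + 2 = 0) = False by simp,
      show (n + 1 = 0) = False by simp, show (n + 3 = 1) = False by simp,
      show (n + 3 = 2) = False by simp, if_true, if_false]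
    linear_combination (4 : Polynomial ℚ) * key n
      + ((Polynomial.X - Polynomial.X ^ 2) * s (n + 1)) * h4
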